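/- Let G be a finite connected simple graph with n vertices, at least one edge, minimum degree δ(G), spectral radius ρ(G), and clique number ω(G). Then π(G) ≥ ρ(G) + (n − ω(G) + 1)·⌈δ(G)/(ω(G)−1)⌉, with equality if and only if G is regular and admits a K_{ω(G)}-decomposition. -/

import Mathlib

set_option linter.unusedSectionVars false
set_option maxHeartbeats 1000000


open Finset SimpleGraph Polynomial
open Matrix

variable {V : Type*}

/-- A clique partition of `G`: a set of cliques of `G` such that every edge of `G`
lies in exactly one of them. -/
def IsCliquePartition [DecidableEq V] (G : SimpleGraph V) (P : Finset (Finset V)) : Prop :=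
  (∀ s ∈ P, G.IsClique (s : Set V)) ∧
    ∀ u v : V, G.Adj u v → ∃! s, s ∈ P ∧ u ∈ s ∧ v ∈ s

/-- The spectral radius of a finite graph: the largest eigenvalue of its adjacency matrix. -/
noncomputable def specRad [Fintype V] [DecidableEq V] (G : SimpleGraph V)
    [DecidableRel G.Adj] : ℝ :=
  sSup {μ : ℝ | Module.End.HasEigenvalue (Matrix.toLin' (G.adjMatrix ℝ)) μ}

/-- `cpT G t` : the minimum number of cliques in a clique partition of `G` in which
every clique has at most `t` vertices. -/
noncomputable def cpT [DecidableEq V] (G : SimpleGraph V) (t : ℕ) : ℕ :=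
  sInf {m | ∃ P : Finset (Finset V),
    IsCliquePartition G P ∧ (∀ s ∈ P, s.card ≤ t) ∧ P.card = m}

/-- `cp G` : the clique partition number of `G`. -/
noncomputable def cp [DecidableEq V] (G : SimpleGraph V) : ℕ :=
  sInf {m | ∃ P : Finset (Finset V), IsCliquePartition G P ∧ P.card = m}

/-- `piT G t` : the minimum total size of a clique partition of `G` in which
every clique has at most `t` vertices. -/
noncomputable def piT [DecidableEq V] (G : SimpleGraph V) (t : ℕ) : ℕ :=
  sInf {m | ∃ P : Finset (Finset V),
    IsCliquePartition G P ∧ (∀ s ∈ P, s.card ≤ t) ∧ ∑ s ∈ P, s.card = m}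

/-- `piTotal G` : the minimum total size of a clique partition of `G`. -/
noncomputable def piTotal [DecidableEq V] (G : SimpleGraph V) : ℕ :=
  sInf {m | ∃ P : Finset (Finset V), IsCliquePartition G P ∧ ∑ s ∈ P, s.card = m}

/-- `kT G t` : the maximum number of pairwise edge-disjoint `t`-cliques in `G`
(`t`-cliques are edge-disjoint iff they share at most one vertex). -/
noncomputable def kT [DecidableEq V] (G : SimpleGraph V) (t : ℕ) : ℕ :=
  sSup {m | ∃ S : Finset (Finset V), (∀ s ∈ S, G.IsNClique t s) ∧
    (∀ s₁ ∈ S, ∀ s₂ ∈ S, s₁ ≠ s₂ → (s₁ ∩ s₂).card ≤ 1) ∧ S.card = m}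




section spectral
variable [Fintype V] [DecidableEq V]

lemma hasEig_iff' (A : Matrix V V ℝ) (μ : ℝ) :
    Module.End.HasEigenvalue (Matrix.toLin' A) μ ↔
      ∃ x : V → ℝ, x ≠ 0 ∧ A *ᵥ x = μ • x := by
  rw [Module.End.hasEigenvalue_iff, Submodule.ne_bot_iff]
  constructor
  · rintro ⟨x, hx, hx0⟩
    exact ⟨x, hx0, by simpa [Matrix.toLin'_apply] using
      (Module.End.mem_eigenspace_iff.mp hx)⟩
  · rintro ⟨x, hx0, hx⟩
    exact ⟨x, Module.End.mem_eigenspace_iff.mpr (by simpa [Matrix.toLin'_apply] using hx), hx0⟩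

lemma hasEigE_iff (A : Matrix V V ℝ) (μ : ℝ) :
    Module.End.HasEigenvalue (Matrix.toEuclideanLin A) μ ↔
      ∃ x : V → ℝ, x ≠ 0 ∧ A *ᵥ x = μ • x := by
  rw [Module.End.hasEigenvalue_iff, Submodule.ne_bot_iff]
  constructor
  · rintro ⟨x, hx, hx0⟩
    refine ⟨(WithLp.equiv 2 (V → ℝ)) x, ?_, ?_⟩
    · simpa using hx0
    · have h1 := Module.End.mem_eigenspace_iff.mp hx
      have h2 := congrArg (WithLp.equiv 2 (V → ℝ)) h1
      simpa [Matrix.ofLp_toEuclideanLin_apply] using h2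
  · rintro ⟨x, hx0, hx⟩
    refine ⟨(WithLp.equiv 2 (V → ℝ)).symm x, Module.End.mem_eigenspace_iff.mpr ?_, by simpa using hx0⟩
    apply (WithLp.equiv 2 (V → ℝ)).injective
    simpa [Matrix.ofLp_toEuclideanLin_apply] using hx

variable (G : SimpleGraph V) [DecidableRel G.Adj]

/-- any eigenvalue is at most any uniform upper bound on degrees -/
lemma eig_le_bound [Nonempty V] {μ : ℝ} {x : V → ℝ} (hx0 : x ≠ 0)
    (hx : (G.adjMatrix ℝ) *ᵥ x = μ • x) {b : ℝ} (hb : ∀ v, (G.degree v : ℝ) ≤ b) :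
    μ ≤ b := by
  obtain ⟨u, -, hu⟩ := Finset.exists_max_image Finset.univ (fun v => |x v|) ⟨Classical.arbitrary V, Finset.mem_univ _⟩
  have hxu : 0 < |x u| := by
    rcases Function.ne_iff.mp hx0 with ⟨w, hw⟩
    exact lt_of_lt_of_le (abs_pos.mpr hw) (hu w (Finset.mem_univ w))
  have h1 : |μ| * |x u| ≤ b * |x u| := by
    have h2 : (G.adjMatrix ℝ *ᵥ x) u = μ * x u := by rw [hx]; rfl
    rw [adjMatrix_mulVec_apply] at h2
    calc |μ| * |x u| = |∑ w ∈ G.neighborFinset u, x w| := by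
          rw [← abs_mul, ← h2]
      _ ≤ ∑ w ∈ G.neighborFinset u, |x w| := Finset.abs_sum_le_sum_abs _ _
      _ ≤ ∑ _w ∈ G.neighborFinset u, |x u| := by
          exact Finset.sum_le_sum fun w _ => hu w (Finset.mem_univ w)
      _ = (G.degree u : ℝ) * |x u| := by
          rw [Finset.sum_const, nsmul_eq_mul]; rfl
      _ ≤ b * |x u| := by
          exact mul_le_mul_of_nonneg_right (hb u) (le_of_lt hxu)
  exact le_trans (le_abs_self μ) (le_of_mul_le_mul_right h1 hxu)

variable [Nonempty V]

noncomputable abbrev TT : Module.End ℝ (EuclideanSpace ℝ V) := Matrix.toEuclideanLin (G.adjMatrix ℝ)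

lemma adjM_herm : (G.adjMatrix ℝ).IsHermitian := by
  ext i j
  simp [Matrix.conjTranspose_apply, SimpleGraph.adjMatrix_apply, G.adj_comm]

lemma TT_symm : (TT G).IsSymmetric :=
  Matrix.isHermitian_iff_isSymmetric.mp (adjM_herm G)

instance : Nontrivial (EuclideanSpace ℝ V) := by
  refine ⟨(WithLp.equiv 2 (V → ℝ)).symm 0, (WithLp.equiv 2 (V → ℝ)).symm (fun _ => 1), fun h => ?_⟩
  have h2 := congrFun ((WithLp.equiv 2 (V → ℝ)).symm.injective h) (Classical.arbitrary V)
  simp at h2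

noncomputable def rsup : ℝ :=
  ⨆ x : {x : EuclideanSpace ℝ V // x ≠ 0},
    RCLike.re (inner ℝ ((TT G) x) (x : EuclideanSpace ℝ V) : ℝ) / ‖(x : EuclideanSpace ℝ V)‖ ^ 2

lemma hasEig_rsup : Module.End.HasEigenvalue (TT G) (rsup G) :=
  (TT_symm G).hasEigenvalue_iSup_of_finiteDimensional

lemma rayleigh_le (x : EuclideanSpace ℝ V) (hx : x ≠ 0) :
    RCLike.re (inner ℝ ((TT G) x) x : ℝ) / ‖x‖ ^ 2 ≤ rsup G := by
  have hb : BddAbove (Set.range fun x : {x : EuclideanSpace ℝ V // x ≠ 0} =>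
      RCLike.re (inner ℝ ((TT G) x) (x : EuclideanSpace ℝ V) : ℝ) / ‖(x : EuclideanSpace ℝ V)‖ ^ 2) := by
    rw [bddAbove_def]
    refine ⟨‖LinearMap.toContinuousLinearMap (TT G)‖, ?_⟩
    rintro y ⟨⟨z, hz⟩, rfl⟩
    simp only
    have hz2 : (0:ℝ) < ‖z‖ ^ 2 := pow_pos (norm_pos_iff.mpr hz) 2
    rw [div_le_iff₀ hz2]
    calc RCLike.re (inner ℝ ((TT G) z) (z : EuclideanSpace ℝ V) : ℝ)
      ≤ ‖(TT G) z‖ * ‖z‖ := by rw [RCLike.re_to_real]; exact real_inner_le_norm _ _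
      _ ≤ ‖LinearMap.toContinuousLinearMap (TT G)‖ * ‖z‖ * ‖z‖ := by
          have := (LinearMap.toContinuousLinearMap (TT G)).le_opNorm z
          exact mul_le_mul_of_nonneg_right (by simpa using this) (norm_nonneg z)
      _ = ‖LinearMap.toContinuousLinearMap (TT G)‖ * ‖z‖ ^ 2 := by ring
  exact le_ciSup hb ⟨x, hx⟩

noncomputable def specRad' : ℝ :=
  sSup {μ : ℝ | Module.End.HasEigenvalue (Matrix.toLin' (G.adjMatrix ℝ)) μ}

lemma rsup_mem : Module.End.HasEigenvalue (Matrix.toLin' (G.adjMatrix ℝ)) (rsup G) := by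
  rw [hasEig_iff']
  exact (hasEigE_iff _ _).mp (hasEig_rsup G)

lemma eig_le_rsup {μ : ℝ} (h : Module.End.HasEigenvalue (Matrix.toLin' (G.adjMatrix ℝ)) μ) :
    μ ≤ rsup G := by
  obtain ⟨x, hx0, hx⟩ := (hasEig_iff' _ _).mp h
  set y : EuclideanSpace ℝ V := (WithLp.equiv 2 (V → ℝ)).symm x with hy
  have hy0 : y ≠ 0 := by simpa [hy] using hx0
  have hTy : (TT G) y = μ • y := by
    rw [hy, WithLp.equiv_symm_apply, Matrix.toEuclideanLin_apply_piLp_toLp, hx]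
    rfl
  have hval : RCLike.re (inner ℝ ((TT G) y) y : ℝ) / ‖y‖ ^ 2 = μ := by
    rw [hTy, RCLike.re_to_real, real_inner_smul_left, real_inner_self_eq_norm_sq]
    field_simp [pow_ne_zero 2 (norm_ne_zero_iff.mpr hy0)]
  rw [← hval]
  exact rayleigh_le G y hy0

lemma specRad'_eq : specRad' G = rsup G := by
  apply le_antisymm
  · exact csSup_le ⟨rsup G, rsup_mem G⟩ fun μ hμ => eig_le_rsup G hμ
  · have hbdd : BddAbove {μ : ℝ | Module.End.HasEigenvalue (Matrix.toLin' (G.adjMatrix ℝ)) μ} := by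
      refine ⟨(Fintype.card V : ℝ), ?_⟩
      intro μ hμ
      obtain ⟨x, hx0, hx⟩ := (hasEig_iff' _ _).mp hμ
      refine eig_le_bound G hx0 hx fun v => ?_
      exact_mod_cast Finset.card_le_univ _
    exact le_csSup hbdd (rsup_mem G)

lemma specRad'_hasEigvec : ∃ x : V → ℝ, x ≠ 0 ∧ (G.adjMatrix ℝ) *ᵥ x = specRad' G • x := by
  have := rsup_mem G
  rw [← specRad'_eq] at this
  exact (hasEig_iff' _ _).mp this

lemma quadform_le_specRad' (x : V → ℝ) (hx0 : x ≠ 0) :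
    ∑ v, ((G.adjMatrix ℝ) *ᵥ x) v * x v ≤ specRad' G * ∑ v, x v ^ 2 := by
  set y : EuclideanSpace ℝ V := (WithLp.equiv 2 (V → ℝ)).symm x with hy
  have hy0 : y ≠ 0 := by simpa [hy] using hx0
  have h1 := rayleigh_le G y hy0
  have hnorm : ‖y‖ ^ 2 = ∑ v, x v ^ 2 := by
    rw [← real_inner_self_eq_norm_sq, PiLp.inner_apply]
    simp [hy, pow_two]
  have hinner : RCLike.re (inner ℝ ((TT G) y) y : ℝ) = ∑ v, ((G.adjMatrix ℝ) *ᵥ x) v * x v := by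
    rw [RCLike.re_to_real]
    rw [hy, WithLp.equiv_symm_apply, Matrix.toEuclideanLin_apply_piLp_toLp, PiLp.inner_apply]
    simp [mul_comm]
  have hpos : (0:ℝ) < ∑ v, x v ^ 2 := by
    rw [← hnorm]; exact pow_pos (norm_pos_iff.mpr hy0) 2
  rw [hinner, hnorm, div_le_iff₀ hpos, ← specRad'_eq] at h1
  linarith [h1]

lemma specRad'_le_of_degree_bound {b : ℝ} (hb : ∀ v, (G.degree v : ℝ) ≤ b) :
    specRad' G ≤ b := by
  refine csSup_le ⟨rsup G, rsup_mem G⟩ fun μ hμ => ?_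
  obtain ⟨x, hx0, hx⟩ := (hasEig_iff' _ _).mp hμ
  exact eig_le_bound G hx0 hx hb

lemma specRad'_eq_of_regular {d : ℕ} (hd : G.IsRegularOfDegree d) :
    specRad' G = (d : ℝ) := by
  apply le_antisymm
  · exact specRad'_le_of_degree_bound G fun v => by rw [hd v]
  · have hbdd : BddAbove {μ : ℝ | Module.End.HasEigenvalue (Matrix.toLin' (G.adjMatrix ℝ)) μ} := by
      refine ⟨(Fintype.card V : ℝ), ?_⟩
      intro μ hμ
      obtain ⟨x, hx0, hx⟩ := (hasEig_iff' _ _).mp hμ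
      refine eig_le_bound G hx0 hx fun v => ?_
      exact_mod_cast Finset.card_le_univ _
    apply le_csSup hbdd
    show Module.End.HasEigenvalue _ _
    rw [hasEig_iff']
    refine ⟨fun _ => 1, ?_, ?_⟩
    · intro h
      have := congrFun h (Classical.arbitrary V)
      simp at this
    · funext v
      rw [Matrix.mulVec, SimpleGraph.adjMatrix_dotProduct]
      simp [hd v]

lemma clique_le_specRad' (s : Finset V) (hs : G.IsClique (s : Set V)) (hne : s.Nonempty) :
    (s.card : ℝ) - 1 ≤ specRad' G := by
  set x : V → ℝ := fun v => if v ∈ s then 1 else 0 with hxdef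
  have hx0 : x ≠ 0 := by
    obtain ⟨v, hv⟩ := hne
    intro h
    have h2 := congrFun h v
    simp [hxdef, hv] at h2
  have hsum2 : ∑ v, x v ^ 2 = (s.card : ℝ) := by
    simp [hxdef, sq, ite_mul, mul_ite, mul_one, mul_zero]
  have hquad : ∑ v, ((G.adjMatrix ℝ) *ᵥ x) v * x v = (s.card : ℝ) * ((s.card : ℝ) - 1) := by
    have key : ∀ v ∈ s, ((G.adjMatrix ℝ) *ᵥ x) v = (s.card : ℝ) - 1 := by
      intro v hv
      rw [adjMatrix_mulVec_apply]
      have hinter : G.neighborFinset v ∩ s = s.erase v := by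
        ext w
        simp only [Finset.mem_inter, mem_neighborFinset, Finset.mem_erase]
        constructor
        · rintro ⟨hadj, hw⟩; exact ⟨(G.ne_of_adj hadj).symm, hw⟩
        · rintro ⟨hne', hw⟩; exact ⟨hs hv hw (fun h => hne' h.symm), hw⟩
      calc ∑ w ∈ G.neighborFinset v, x w
          = ((G.neighborFinset v ∩ s).card : ℝ) := by
            simp [hxdef, Finset.sum_ite_mem]
        _ = (s.card : ℝ) - 1 := by
            rw [hinter, Finset.card_erase_of_mem hv]
            have : 1 ≤ s.card := Finset.card_pos.mpr ⟨v, hv⟩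
            push_cast [Nat.cast_sub this]
            ring
    calc ∑ v, ((G.adjMatrix ℝ) *ᵥ x) v * x v
        = ∑ v ∈ s, ((G.adjMatrix ℝ) *ᵥ x) v := by
          simp [hxdef, mul_ite, mul_one, mul_zero, Finset.sum_ite_mem]
      _ = (s.card : ℝ) * ((s.card : ℝ) - 1) := by
          rw [Finset.sum_congr rfl key, Finset.sum_const, nsmul_eq_mul]
  have h := quadform_le_specRad' G x hx0
  rw [hquad, hsum2] at h
  have hcard : (0:ℝ) < s.card := by exact_mod_cast Finset.card_pos.mpr hne
  nlinarith [h, hcard]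

lemma exists_good_vector (hw : 0 ≤ specRad' G) :
    ∃ (y : V → ℝ) (u : V), (∀ v, 0 ≤ y v) ∧ (∀ v, y v ≤ 1) ∧ y u = 1 ∧
      ∀ v, specRad' G * y v ≤ ∑ w ∈ G.neighborFinset v, y w := by
  obtain ⟨x, hx0, hx⟩ := specRad'_hasEigvec G
  obtain ⟨u, -, hu⟩ := Finset.exists_max_image Finset.univ (fun v => |x v|)
    ⟨Classical.arbitrary V, Finset.mem_univ _⟩
  have hM : 0 < |x u| := by
    rcases Function.ne_iff.mp hx0 with ⟨w, hw'⟩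
    exact lt_of_lt_of_le (abs_pos.mpr hw') (hu w (Finset.mem_univ w))
  refine ⟨fun v => |x v| / |x u|, u, fun v => by positivity, fun v => ?_, by
    field_simp, fun v => ?_⟩
  · rw [div_le_one hM]; exact hu v (Finset.mem_univ v)
  · simp only
    have h2 : (G.adjMatrix ℝ *ᵥ x) v = specRad' G * x v := by rw [hx]; rfl
    rw [adjMatrix_mulVec_apply] at h2
    have : specRad' G * |x v| ≤ ∑ w ∈ G.neighborFinset v, |x w| := by
      calc specRad' G * |x v| = |specRad' G * x v| := by
            rw [abs_mul, abs_of_nonneg hw]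
        _ = |∑ w ∈ G.neighborFinset v, x w| := by rw [← h2]
        _ ≤ ∑ w ∈ G.neighborFinset v, |x w| := Finset.abs_sum_le_sum_abs _ _
    calc specRad' G * (|x v| / |x u|) = (specRad' G * |x v|) / |x u| := by ring
      _ ≤ (∑ w ∈ G.neighborFinset v, |x w|) / |x u| := by
          apply div_le_div_of_nonneg_right this hM.le |>.trans_eq rfl
      _ = ∑ w ∈ G.neighborFinset v, |x w| / |x u| := by rw [Finset.sum_div]

lemma sum_neighbor_sum (y : V → ℝ) :
    ∑ v, ∑ w ∈ G.neighborFinset v, y w = ∑ w, (G.degree w : ℝ) * y w := by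
  have h1 : ∀ v : V, ∑ w ∈ G.neighborFinset v, y w = ∑ w, if G.Adj v w then y w else 0 := by
    intro v
    rw [neighborFinset_eq_filter, Finset.sum_filter]
  rw [Finset.sum_congr rfl fun v _ => h1 v, Finset.sum_comm]
  refine Finset.sum_congr rfl fun w _ => ?_
  have h2 : ∀ v : V, (if G.Adj v w then y w else 0) = (if G.Adj w v then y w else 0) := by
    intro v
    by_cases h : G.Adj v w
    · rw [if_pos h, if_pos ((G.adj_comm v w).mp h)]
    · rw [if_neg h, if_neg (fun h' => h ((G.adj_comm w v).mp h'))]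
  rw [Finset.sum_congr rfl fun v _ => h2 v, ← Finset.sum_filter]
  rw [Finset.sum_const, ← neighborFinset_eq_filter, nsmul_eq_mul]
  rfl

lemma specRad_eq_specRad' [Fintype V] [DecidableEq V] (G : SimpleGraph V) [DecidableRel G.Adj] : specRad G = specRad' G := rfl

end spectral




section comb
variable [Fintype V] [DecidableEq V] (G : SimpleGraph V) [DecidableRel G.Adj]

def pairFinset [DecidableEq V] : Sym2 V → Finset V :=
  Sym2.lift ⟨fun u v => {u, v}, fun u v => Finset.pair_comm u v⟩

lemma mem_pairFinset [DecidableEq V] (w u v : V) :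
    w ∈ pairFinset s(u, v) ↔ w = u ∨ w = v := by
  show w ∈ ({u, v} : Finset V) ↔ _
  simp

lemma exists_cliquePartition : ∃ P : Finset (Finset V), IsCliquePartition G P := by
  classical
  refine ⟨G.edgeFinset.image pairFinset, ?_, ?_⟩
  · intro s hs
    obtain ⟨e, he, rfl⟩ := Finset.mem_image.mp hs
    induction e with
    | h u v =>
      rw [mem_edgeFinset] at he
      show G.IsClique (({u, v} : Finset V) : Set V)
      rw [Finset.coe_insert, Finset.coe_singleton]
      exact isClique_pair.mpr fun _ => he
  · intro u v huv
    refine ⟨({u, v} : Finset V), ⟨?_, by simp, by simp⟩, ?_⟩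
    · refine Finset.mem_image.mpr ⟨s(u, v), ?_, rfl⟩
      rw [mem_edgeFinset]
      exact huv
    · rintro t ⟨ht, hut, hvt⟩
      obtain ⟨e, he, rfl⟩ := Finset.mem_image.mp ht
      induction e with
      | h a b =>
        rw [mem_edgeFinset] at he
        show pairFinset s(a, b) = ({u, v} : Finset V)
        have hab : a ≠ b := G.ne_of_adj he
        have huvne : u ≠ v := G.ne_of_adj huv
        have hsub : ({u, v} : Finset V) ⊆ pairFinset s(a, b) := by
          intro w hw
          simp only [Finset.mem_insert, Finset.mem_singleton] at hw
          rcases hw with rfl | rfl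
          · exact hut
          · exact hvt
        refine (Finset.eq_of_subset_of_card_le hsub ?_).symm
        have h1 : (pairFinset s(a, b)).card ≤ 2 := by
          show ({a, b} : Finset V).card ≤ 2
          exact Finset.card_insert_le _ _ |>.trans (by simp)
        have h2 : ({u, v} : Finset V).card = 2 := Finset.card_pair huvne
        omega

variable {G}

lemma sum_card_eq (P : Finset (Finset V)) :
    ∑ s ∈ P, s.card = ∑ v, (P.filter (fun s => v ∈ s)).card := by
  classical
  have h1 : ∀ s ∈ P, s.card = ∑ v, if v ∈ s then 1 else 0 := by
    intro s _
    simp [Finset.sum_ite_mem]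
  rw [Finset.sum_congr rfl h1, Finset.sum_comm]
  congr 1
  funext v
  rw [Finset.card_filter]

lemma degree_eq_sum {P : Finset (Finset V)} (hP : IsCliquePartition G P) (v : V) :
    G.degree v = ∑ s ∈ P.filter (fun s => v ∈ s), (s.card - 1) := by
  classical
  have hbU : G.neighborFinset v = (P.filter (fun s => v ∈ s)).biUnion (fun s => s.erase v) := by
    ext w
    simp only [mem_neighborFinset, Finset.mem_biUnion, Finset.mem_filter, Finset.mem_erase]
    constructor
    · intro hadj
      obtain ⟨s, ⟨hsP, hvs, hws⟩, -⟩ := hP.2 v w hadj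
      exact ⟨s, ⟨hsP, hvs⟩, (G.ne_of_adj hadj).symm, hws⟩
    · rintro ⟨s, ⟨hsP, hvs⟩, hwv, hws⟩
      exact hP.1 s hsP hvs hws (fun h => hwv h.symm)
  have hdisj : ∀ s₁ ∈ P.filter (fun s => v ∈ s), ∀ s₂ ∈ P.filter (fun s => v ∈ s),
      s₁ ≠ s₂ → Disjoint (s₁.erase v) (s₂.erase v) := by
    intro s₁ hs₁ s₂ hs₂ hne
    rw [Finset.mem_filter] at hs₁ hs₂
    rw [Finset.disjoint_left]
    intro w hw1 hw2
    rw [Finset.mem_erase] at hw1 hw2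
    have hadj : G.Adj v w := hP.1 s₁ hs₁.1 hs₁.2 hw1.2 (fun h => hw1.1 h.symm)
    obtain ⟨s, -, huniq⟩ := hP.2 v w hadj
    exact hne ((huniq s₁ ⟨hs₁.1, hs₁.2, hw1.2⟩).trans (huniq s₂ ⟨hs₂.1, hs₂.2, hw2.2⟩).symm)
  rw [SimpleGraph.degree, hbU, Finset.card_biUnion hdisj]
  refine Finset.sum_congr rfl fun s hs => ?_
  rw [Finset.mem_filter] at hs
  rw [Finset.card_erase_of_mem hs.2]

end comb

/-- Spectral lower bound for the minimum total size `π(G)` of a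
clique partition: `π(G) ≥ ρ(G) + (n − ω(G) + 1)·⌈δ(G)/(ω(G)−1)⌉`, with equality if and
only if `G` is regular and admits a `K_{ω(G)}`-decomposition. -/
theorem piTotal_ge_specRad [Fintype V] [DecidableEq V] (G : SimpleGraph V) [DecidableRel G.Adj]
    (hconn : G.Connected) (hedge : G.edgeSet.Nonempty) :
    specRad G + ((Fintype.card V : ℝ) - G.cliqueNum + 1) *
        (⌈(G.minDegree : ℝ) / ((G.cliqueNum : ℝ) - 1)⌉ : ℤ) ≤ (piTotal G : ℝ) ∧
      ((piTotal G : ℝ) = specRad G + ((Fintype.card V : ℝ) - G.cliqueNum + 1) *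
          (⌈(G.minDegree : ℝ) / ((G.cliqueNum : ℝ) - 1)⌉ : ℤ) ↔
        (∃ d, G.IsRegularOfDegree d) ∧
          ∃ P : Finset (Finset V), IsCliquePartition G P ∧ ∀ s ∈ P, s.card = G.cliqueNum) := by
  classical
  haveI hNE : Nonempty V := hconn.nonempty
  obtain ⟨ab, hab'⟩ := hedge
  obtain ⟨a, b, hab⟩ : ∃ a b : V, G.Adj a b := by
    induction ab with
    | h a b => exact ⟨a, b, hab'⟩
  rw [specRad_eq_specRad' G]
  set C : ℝ := ((⌈(G.minDegree : ℝ) / ((G.cliqueNum : ℝ) - 1)⌉ : ℤ) : ℝ) with hCdef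
  set W : ℝ := (G.cliqueNum : ℝ) with hWdef
  set R : ℝ := specRad' G with hRdef
  set N : ℝ := (Fintype.card V : ℝ) with hNdef
  -- basic facts
  have hω2 : 2 ≤ G.cliqueNum := by
    have hcl : G.IsClique (({a, b} : Finset V) : Set V) := by
      rw [Finset.coe_insert, Finset.coe_singleton]
      exact isClique_pair.mpr fun _ => hab
    have h2 := SimpleGraph.IsClique.card_le_cliqueNum (tc := hcl)
    rwa [Finset.card_pair (G.ne_of_adj hab)] at h2
  have hW2 : (2:ℝ) ≤ W := by rw [hWdef]; exact_mod_cast hω2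
  have hW1 : (0:ℝ) < W - 1 := by linarith
  have hRW : W - 1 ≤ R := by
    obtain ⟨K, hK⟩ := G.exists_isNClique_cliqueNum
    have hKne : K.Nonempty := by
      rw [← Finset.card_pos, hK.card_eq]; omega
    have h3 := clique_le_specRad' G K hK.isClique hKne
    rw [hK.card_eq] at h3
    exact h3
  have hR0 : 0 ≤ R := by linarith
  have hωN : G.cliqueNum ≤ Fintype.card V := by
    obtain ⟨K, hK⟩ := G.exists_isNClique_cliqueNum
    rw [← hK.card_eq]; exact Finset.card_le_univ K
  have hNW : W ≤ N := by rw [hWdef, hNdef]; exact_mod_cast hωN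
  -- good eigen-like vector
  obtain ⟨y, u, hy0, hy1, hyu, hyineq⟩ := exists_good_vector G hR0
  set t := ∑ v, y v with htdef
  have ht_le : t ≤ N := by
    rw [htdef, hNdef]
    calc ∑ v, y v ≤ ∑ _v : V, (1:ℝ) := Finset.sum_le_sum fun v _ => hy1 v
      _ = (Fintype.card V : ℝ) := by rw [Finset.sum_const, nsmul_eq_mul, mul_one, Finset.card_univ]
  have ht_ge : 1 + R ≤ t := by
    have hsub : G.neighborFinset u ⊆ Finset.univ.erase u := by
      intro w hw
      rw [mem_neighborFinset] at hw
      exact Finset.mem_erase.mpr ⟨(G.ne_of_adj hw).symm, Finset.mem_univ w⟩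
    have h1 : ∑ w ∈ G.neighborFinset u, y w ≤ ∑ w ∈ Finset.univ.erase u, y w :=
      Finset.sum_le_sum_of_subset_of_nonneg hsub fun i _ _ => hy0 i
    have h2 := hyineq u
    rw [hyu, mul_one] at h2
    have h3 : ∑ v, y v = y u + ∑ w ∈ Finset.univ.erase u, y w :=
      (Finset.add_sum_erase _ _ (Finset.mem_univ u)).symm
    rw [htdef, h3, hyu]
    linarith
  -- per-partition facts
  have partition_facts : ∀ P : Finset (Finset V), IsCliquePartition G P →
      (N * C ≤ ((∑ s ∈ P, s.card : ℕ) : ℝ)) ∧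
      (R + (N - W + 1) * C ≤ ((∑ s ∈ P, s.card : ℕ) : ℝ)) ∧
      ((W - 1) * C ≠ R → R + (N - W + 1) * C < ((∑ s ∈ P, s.card : ℕ) : ℝ)) ∧
      (∀ v : V, C ≤ (((P.filter fun s => v ∈ s).card : ℕ) : ℝ)) ∧
      (∀ v : V, (G.degree v : ℝ) ≤ (W - 1) * (((P.filter fun s => v ∈ s).card : ℕ) : ℝ)) ∧
      (((∑ s ∈ P, s.card : ℕ) : ℝ) = ∑ v : V, (((P.filter fun s => v ∈ s).card : ℕ) : ℝ)) := by
    intro P hP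
    have hsumk : ((∑ s ∈ P, s.card : ℕ) : ℝ) = ∑ v : V, (((P.filter fun s => v ∈ s).card : ℕ) : ℝ) := by
      rw [sum_card_eq P]
      push_cast
      rfl
    have hdeg : ∀ v : V, (G.degree v : ℝ) ≤ (W - 1) * (((P.filter fun s => v ∈ s).card : ℕ) : ℝ) := by
      intro v
      have h1 : G.degree v = ∑ s ∈ P.filter (fun s => v ∈ s), (s.card - 1) := degree_eq_sum hP v
      have h2 : ∑ s ∈ P.filter (fun s => v ∈ s), (s.card - 1) ≤
          (P.filter (fun s => v ∈ s)).card * (G.cliqueNum - 1) := by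
        have h3 : ∀ s ∈ P.filter (fun s => v ∈ s), s.card - 1 ≤ G.cliqueNum - 1 := by
          intro s hs
          have hs' : s ∈ P := (Finset.mem_filter.mp hs).1
          have h4 : s.card ≤ G.cliqueNum := SimpleGraph.IsClique.card_le_cliqueNum (tc := hP.1 s hs')
          omega
        calc ∑ s ∈ P.filter (fun s => v ∈ s), (s.card - 1)
            ≤ ∑ _s ∈ P.filter (fun s => v ∈ s), (G.cliqueNum - 1) := Finset.sum_le_sum h3
          _ = (P.filter (fun s => v ∈ s)).card * (G.cliqueNum - 1) := by
              rw [Finset.sum_const, smul_eq_mul]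
      have h5 : G.degree v ≤ (P.filter (fun s => v ∈ s)).card * (G.cliqueNum - 1) := by
        rw [h1]; exact h2
      calc (G.degree v : ℝ)
          ≤ (((P.filter (fun s => v ∈ s)).card * (G.cliqueNum - 1) : ℕ) : ℝ) := by exact_mod_cast h5
        _ = (W - 1) * (((P.filter fun s => v ∈ s).card : ℕ) : ℝ) := by
            rw [hWdef]
            push_cast [Nat.cast_sub (by omega : 1 ≤ G.cliqueNum)]
            ring
    have hkc : ∀ v : V, C ≤ (((P.filter fun s => v ∈ s).card : ℕ) : ℝ) := by
      intro v
      have hδ : (G.minDegree : ℝ) ≤ (W - 1) * (((P.filter fun s => v ∈ s).card : ℕ) : ℝ) := by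
        calc (G.minDegree : ℝ) ≤ (G.degree v : ℝ) := by exact_mod_cast G.minDegree_le_degree v
          _ ≤ _ := hdeg v
      have hceil : (⌈(G.minDegree : ℝ) / ((G.cliqueNum : ℝ) - 1)⌉ : ℤ) ≤
          (((P.filter fun s => v ∈ s).card : ℕ) : ℤ) := by
        apply Int.ceil_le.mpr
        rw [div_le_iff₀ (by rw [← hWdef]; exact hW1)]
        push_cast
        rw [← hWdef]
        linarith
      have h6 : ((⌈(G.minDegree : ℝ) / ((G.cliqueNum : ℝ) - 1)⌉ : ℤ) : ℝ) ≤
          (((P.filter fun s => v ∈ s).card : ℕ) : ℝ) := by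
        have h7 := Int.cast_le (R := ℝ) |>.mpr hceil
        rwa [Int.cast_natCast] at h7
      rw [hCdef]
      exact h6
    have h_each : ∀ v : V, (W - 1) * C * (1 - y v) + (G.degree v : ℝ) * y v ≤
        (W - 1) * (((P.filter fun s => v ∈ s).card : ℕ) : ℝ) := by
      intro v
      have h1 := hkc v
      have h2 := hdeg v
      have h3 := hy0 v
      have h4 := hy1 v
      nlinarith [mul_le_mul_of_nonneg_right h1 (by linarith : (0:ℝ) ≤ 1 - y v),
        mul_le_mul_of_nonneg_right h2 h3]
    have hsum2 : (W - 1) * C * (N - t) + (∑ v, (G.degree v : ℝ) * y v) ≤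
        (W - 1) * ((∑ s ∈ P, s.card : ℕ) : ℝ) := by
      have h1 := Finset.sum_le_sum fun v (_ : v ∈ Finset.univ) => h_each v
      rw [Finset.sum_add_distrib] at h1
      have h2 : ∑ v : V, (W - 1) * C * (1 - y v) = (W - 1) * C * (N - t) := by
        rw [← Finset.mul_sum, Finset.sum_sub_distrib, Finset.sum_const, nsmul_eq_mul, mul_one,
          Finset.card_univ, htdef, hNdef]
      have h3 : ∑ v : V, (W - 1) * (((P.filter fun s => v ∈ s).card : ℕ) : ℝ) =
          (W - 1) * ((∑ s ∈ P, s.card : ℕ) : ℝ) := by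
        rw [← Finset.mul_sum, ← hsumk]
      rw [h2, h3] at h1
      exact h1
    have hdegy : R * t ≤ ∑ v, (G.degree v : ℝ) * y v := by
      have h1 := Finset.sum_le_sum fun v (_ : v ∈ Finset.univ) => hyineq v
      rw [sum_neighbor_sum] at h1
      calc R * t = ∑ v, R * y v := by rw [htdef, Finset.mul_sum]
        _ ≤ _ := h1
    have hNC : N * C ≤ ((∑ s ∈ P, s.card : ℕ) : ℝ) := by
      rw [hsumk]
      calc N * C = ∑ _v : V, C := by
            rw [Finset.sum_const, nsmul_eq_mul, hNdef, Finset.card_univ]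
        _ ≤ _ := Finset.sum_le_sum fun v _ => hkc v
    have e1 : (W - 1) * C * (N - t) + R * t ≤ (W - 1) * ((∑ s ∈ P, s.card : ℕ) : ℝ) := by
      linarith [hsum2, hdegy]
    have hmain : R + (N - W + 1) * C ≤ ((∑ s ∈ P, s.card : ℕ) : ℝ) := by
      rcases le_or_gt ((W - 1) * C) R with hcase | hcase
      · have e2 : (1 + R) * (R - (W - 1) * C) ≤ t * (R - (W - 1) * C) :=
          mul_le_mul_of_nonneg_right ht_ge (by linarith)
        have e3 : (W - 1) * (R - (W - 1) * C) ≤ (1 + R) * (R - (W - 1) * C) :=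
          mul_le_mul_of_nonneg_right (by linarith) (by linarith)
        have e4 : (W - 1) * C * (N - t) + R * t = (W - 1) * C * N + t * (R - (W - 1) * C) := by ring
        have efin : (W - 1) * (R + (N - W + 1) * C) ≤ (W - 1) * ((∑ s ∈ P, s.card : ℕ) : ℝ) := by
          nlinarith [e1, e2, e3, e4]
        exact le_of_mul_le_mul_left efin hW1
      · linarith [hNC]
    have hstrict : (W - 1) * C ≠ R → R + (N - W + 1) * C < ((∑ s ∈ P, s.card : ℕ) : ℝ) := by
      intro hne
      rcases lt_or_gt_of_ne hne with hcase | hcase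
      · -- (W-1)*C < R
        have e2 : (1 + R) * (R - (W - 1) * C) ≤ t * (R - (W - 1) * C) :=
          mul_le_mul_of_nonneg_right ht_ge (by linarith)
        have e3 : (W - 1) * (R - (W - 1) * C) < (1 + R) * (R - (W - 1) * C) :=
          mul_lt_mul_of_pos_right (by linarith) (by linarith)
        have e4 : (W - 1) * C * (N - t) + R * t = (W - 1) * C * N + t * (R - (W - 1) * C) := by ring
        have efin : (W - 1) * (R + (N - W + 1) * C) < (W - 1) * ((∑ s ∈ P, s.card : ℕ) : ℝ) := by
          nlinarith [e1, e2, e3, e4]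
        exact lt_of_mul_lt_mul_left efin (by linarith)
      · linarith [hNC]
    exact ⟨hNC, hmain, hstrict, hkc, hdeg, hsumk⟩
  -- piTotal facts
  have hPset : {m | ∃ P : Finset (Finset V), IsCliquePartition G P ∧ ∑ s ∈ P, s.card = m}.Nonempty := by
    obtain ⟨P, hP⟩ := exists_cliquePartition G
    exact ⟨∑ s ∈ P, s.card, P, hP, rfl⟩
  have hmem : piTotal G ∈ {m | ∃ P : Finset (Finset V), IsCliquePartition G P ∧ ∑ s ∈ P, s.card = m} :=
    Nat.sInf_mem hPset
  obtain ⟨Pmin, hPmin, hPsum⟩ := hmem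
  have hle : ∀ P : Finset (Finset V), IsCliquePartition G P → piTotal G ≤ ∑ s ∈ P, s.card :=
    fun P hP => Nat.sInf_le ⟨P, hP, rfl⟩
  have hpart1 : R + (N - W + 1) * C ≤ (piTotal G : ℝ) := by
    have h1 := (partition_facts Pmin hPmin).2.1
    rw [hPsum] at h1
    exact h1
  refine ⟨hpart1, ?_, ?_⟩
  · -- forward: equality implies regular + decomposition
    intro heq
    have hReq : (W - 1) * C = R := by
      by_contra hne
      have h1 := (partition_facts Pmin hPmin).2.2.1 hne
      rw [hPsum] at h1
      linarith [heq.ge, h1]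
    have hπ : (piTotal G : ℝ) = N * C := by
      rw [heq, ← hReq]; ring
    have hkC : ∀ v : V, (((Pmin.filter fun s => v ∈ s).card : ℕ) : ℝ) = C := by
      have hsumk := (partition_facts Pmin hPmin).2.2.2.2.2
      have hge := (partition_facts Pmin hPmin).2.2.2.1
      have hzero : ∑ v : V, ((((Pmin.filter fun s => v ∈ s).card : ℕ) : ℝ) - C) = 0 := by
        rw [Finset.sum_sub_distrib, Finset.sum_const, nsmul_eq_mul, Finset.card_univ]
        rw [← hsumk, hPsum, hπ, hNdef]
        ring
      intro v
      have h2 := (Finset.sum_eq_zero_iff_of_nonneg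
        (fun i _ => sub_nonneg.mpr (hge i))).mp hzero v (Finset.mem_univ v)
      linarith [h2]
    have hdegle : ∀ v : V, (G.degree v : ℝ) ≤ R := by
      intro v
      have h1 := (partition_facts Pmin hPmin).2.2.2.2.1 v
      rw [hkC v, hReq] at h1
      exact h1
    have hsumN : ∀ v : V, (∑ w ∈ G.neighborFinset v, (1:ℝ)) = (G.degree v : ℝ) := by
      intro v
      rw [Finset.sum_const, nsmul_eq_mul, mul_one]
      rfl
    have hstep : ∀ v w : V, y v = 1 → G.Adj v w → y w = 1 := by
      intro v w hv hadj
      have h1 : R ≤ ∑ w' ∈ G.neighborFinset v, y w' := by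
        have h2 := hyineq v; rwa [hv, mul_one] at h2
      have h2 : ∑ w' ∈ G.neighborFinset v, y w' ≤ (G.degree v : ℝ) := by
        calc ∑ w' ∈ G.neighborFinset v, y w' ≤ ∑ w' ∈ G.neighborFinset v, (1:ℝ) :=
              Finset.sum_le_sum fun i _ => hy1 i
          _ = (G.degree v : ℝ) := hsumN v
      by_contra hcon
      have hwin : w ∈ G.neighborFinset v := by rw [mem_neighborFinset]; exact hadj
      have hlt : ∑ w' ∈ G.neighborFinset v, y w' < ∑ w' ∈ G.neighborFinset v, (1:ℝ) :=
        Finset.sum_lt_sum (fun i _ => hy1 i) ⟨w, hwin, lt_of_le_of_ne (hy1 w) hcon⟩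
      rw [hsumN v] at hlt
      linarith [hdegle v]
    have hyall : ∀ v : V, y v = 1 := by
      have aux : ∀ (a' b' : V), G.Walk a' b' → y a' = 1 → y b' = 1 := by
        intro a' b' p
        induction p with
        | nil => exact id
        | cons h q ih => intro ha; exact ih (hstep _ _ ha h)
      intro v
      obtain ⟨p⟩ := hconn.preconnected u v
      exact aux u v p hyu
    have hdegeq : ∀ v : V, (G.degree v : ℝ) = R := by
      intro v
      refine le_antisymm (hdegle v) ?_
      have h1 := hyineq v
      rw [hyall v, mul_one] at h1
      calc R ≤ ∑ w' ∈ G.neighborFinset v, y w' := h1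
        _ = ∑ w' ∈ G.neighborFinset v, (1:ℝ) :=
            Finset.sum_congr rfl fun w' _ => hyall w'
        _ = (G.degree v : ℝ) := hsumN v
    constructor
    · refine ⟨G.degree u, fun v => ?_⟩
      have : (G.degree v : ℝ) = (G.degree u : ℝ) := by rw [hdegeq v, hdegeq u]
      exact_mod_cast this
    · refine ⟨Pmin.erase ∅, ⟨?_, ?_⟩, ?_⟩
      · intro s hs
        exact hPmin.1 s (Finset.mem_of_mem_erase hs)
      · intro a' b' h
        obtain ⟨s, ⟨hsP, has, hbs⟩, huniq⟩ := hPmin.2 a' b' h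
        refine ⟨s, ⟨Finset.mem_erase.mpr ⟨Finset.ne_empty_of_mem has, hsP⟩, has, hbs⟩, ?_⟩
        rintro q ⟨hqP, haq, hbq⟩
        exact huniq q ⟨Finset.mem_of_mem_erase hqP, haq, hbq⟩
      · intro s hs
        have hsP : s ∈ Pmin := Finset.mem_of_mem_erase hs
        have hsne : s ≠ ∅ := (Finset.mem_erase.mp hs).1
        obtain ⟨v, hv⟩ := Finset.nonempty_iff_ne_empty.mpr hsne
        have hdeg_nat : G.degree v = ∑ s' ∈ Pmin.filter (fun s' => v ∈ s'), (s'.card - 1) :=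
          degree_eq_sum hPmin v
        have hterm_le : ∀ s' ∈ Pmin.filter (fun s' => v ∈ s'), s'.card - 1 ≤ G.cliqueNum - 1 := by
          intro s' hs'
          have h4 : s'.card ≤ G.cliqueNum :=
            SimpleGraph.IsClique.card_le_cliqueNum (tc := hPmin.1 s' (Finset.mem_filter.mp hs').1)
          omega
        have hall : ∀ s' ∈ Pmin.filter (fun s' => v ∈ s'), s'.card - 1 = G.cliqueNum - 1 := by
          by_contra hx
          push_neg at hx
          obtain ⟨s0, hs0, hs0ne⟩ := hx
          have hlt : ∑ s' ∈ Pmin.filter (fun s' => v ∈ s'), (s'.card - 1) <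
              ∑ _s' ∈ Pmin.filter (fun s' => v ∈ s'), (G.cliqueNum - 1) :=
            Finset.sum_lt_sum hterm_le ⟨s0, hs0, lt_of_le_of_ne (hterm_le s0 hs0) hs0ne⟩
          rw [Finset.sum_const, smul_eq_mul] at hlt
          rw [← hdeg_nat] at hlt
          -- cast to real and contradict
          have hcast : (G.degree v : ℝ) <
              (((Pmin.filter fun s' => v ∈ s').card : ℕ) : ℝ) * (W - 1) := by
            calc (G.degree v : ℝ) <
                (((Pmin.filter fun s' => v ∈ s').card * (G.cliqueNum - 1) : ℕ) : ℝ) := by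
                  exact_mod_cast hlt
              _ = (((Pmin.filter fun s' => v ∈ s').card : ℕ) : ℝ) * (W - 1) := by
                  rw [hWdef]
                  push_cast [Nat.cast_sub (by omega : 1 ≤ G.cliqueNum)]
                  ring
          rw [hkC v] at hcast
          rw [hdegeq v] at hcast
          linarith [hReq, hcast]
        have h5 := hall s (Finset.mem_filter.mpr ⟨hsP, hv⟩)
        have hcard1 : 1 ≤ s.card := Finset.card_pos.mpr ⟨v, hv⟩
        omega
  · -- converse
    rintro ⟨⟨d, hreg⟩, P, hP, hPcard⟩
    set v0 : V := Classical.arbitrary V with hv0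
    have hδd : G.minDegree = d :=
      le_antisymm (le_of_le_of_eq (G.minDegree_le_degree v0) (hreg v0))
        (G.le_minDegree_of_forall_le_degree d fun v => (hreg v).ge)
    have hkd : ∀ v : V, d = (P.filter (fun s => v ∈ s)).card * (G.cliqueNum - 1) := by
      intro v
      have h1 := degree_eq_sum hP v
      rw [hreg v] at h1
      rw [h1]
      calc ∑ s ∈ P.filter (fun s => v ∈ s), (s.card - 1)
          = ∑ _s ∈ P.filter (fun s => v ∈ s), (G.cliqueNum - 1) :=
            Finset.sum_congr rfl fun s hs => by rw [hPcard s (Finset.mem_filter.mp hs).1]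
        _ = (P.filter (fun s => v ∈ s)).card * (G.cliqueNum - 1) := by
            rw [Finset.sum_const, smul_eq_mul]
    set k0 : ℕ := (P.filter (fun s => v0 ∈ s)).card with hk0
    have hkall : ∀ v : V, (P.filter (fun s => v ∈ s)).card = k0 := by
      intro v
      have h1 : (P.filter (fun s => v ∈ s)).card * (G.cliqueNum - 1) = k0 * (G.cliqueNum - 1) := by
        rw [← hkd v, hk0, ← hkd v0]
      exact Nat.eq_of_mul_eq_mul_right (by omega) h1
    have hdr : (d : ℝ) = (k0 : ℝ) * (W - 1) := by
      rw [hkd v0, ← hk0, hWdef]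
      push_cast [Nat.cast_sub (by omega : 1 ≤ G.cliqueNum)]
      ring
    have hCk : C = (k0 : ℝ) := by
      have hq : (G.minDegree : ℝ) / ((G.cliqueNum : ℝ) - 1) = (k0 : ℝ) := by
        rw [hδd, hdr, ← hWdef]
        field_simp
      rw [hCdef, hq]
      rw [Int.ceil_natCast]
      simp
    have hRd : R = (d : ℝ) := specRad'_eq_of_regular G hreg
    have hsum : ((∑ s ∈ P, s.card : ℕ) : ℝ) = N * (k0 : ℝ) := by
      have h1 := sum_card_eq P
      rw [h1]
      push_cast
      calc (∑ v : V, ((P.filter fun s => v ∈ s).card : ℝ))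
          = ∑ _v : V, (k0 : ℝ) := by
            refine Finset.sum_congr rfl fun v _ => ?_
            exact_mod_cast congrArg (Nat.cast (R := ℝ)) (hkall v)
        _ = N * (k0 : ℝ) := by
            rw [Finset.sum_const, nsmul_eq_mul, hNdef, Finset.card_univ]
    have hub : (piTotal G : ℝ) ≤ N * (k0 : ℝ) := by
      rw [← hsum]
      exact_mod_cast hle P hP
    have hrhs : R + (N - W + 1) * C = N * (k0 : ℝ) := by
      rw [hRd, hCk, hdr]; ring
    linarith [hpart1, hub, hrhs]
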